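/- For every v ∈ A_n there exists x ∈ L(G) with ‖v − x‖ ≤ √2. -/

import Mathlib

/-- For every `v ∈ A_n` there exists `x ∈ L(G)` with `‖v - x‖ ≤ √2`,
i.e. with squared distance at most `2`. -/
theorem exists_lattice_point_close (n : ℕ) (G : Type*) [AddCommGroup G] [Fintype G]
    (g : Fin n → G) (hinj : Function.Injective g) (h0 : ∀ i, g i ≠ 0)
    (hcard : Fintype.card G = n + 1)
    (v : Fin (n + 1) → ℤ) (hv : ∑ i : Fin (n + 1), v i = 0) :
    ∃ x : Fin (n + 1) → ℤ,
      (∑ i : Fin (n + 1), x i = 0) ∧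
      (∑ i : Fin n, x i.castSucc • g i = 0) ∧
      ∑ i : Fin (n + 1), (v i - x i) ^ 2 ≤ 2 := by
  classical
  set s : G := ∑ i : Fin n, v i.castSucc • g i with hs
  by_cases h : s = 0
  · exact ⟨v, hv, h, by simp⟩
  · -- s is a nonzero element, so it is in the range of g
    have hsurj : ∃ j, g j = s := by
      let g' : Fin n → {a : G // a ≠ 0} := fun i => ⟨g i, h0 i⟩
      have hinj' : Function.Injective g' := fun a b hab => hinj (congrArg Subtype.val hab)
      have hcard' : Fintype.card {a : G // a ≠ 0} = n := by
        rw [Fintype.card_subtype_compl, hcard]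
        simp
      have hsurj' : Function.Surjective g' :=
        ((Fintype.bijective_iff_injective_and_card g').mpr
          ⟨hinj', by simp [hcard']⟩).2
      obtain ⟨j, hj⟩ := hsurj' ⟨s, h⟩
      exact ⟨j, congrArg Subtype.val hj⟩
    obtain ⟨j, hj⟩ := hsurj
    set jc : Fin (n + 1) := j.castSucc with hjc
    set l : Fin (n + 1) := Fin.last n with hl
    have hne : jc ≠ l := (Fin.castSucc_lt_last j).ne
    refine ⟨fun i => v i - (if i = jc then 1 else 0) + (if i = l then 1 else 0), ?_, ?_, ?_⟩
    · rw [Finset.sum_add_distrib, Finset.sum_sub_distrib, hv]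
      simp
    · have key : ∀ i : Fin n,
          (v i.castSucc - (if i.castSucc = jc then 1 else 0)
            + (if i.castSucc = l then (1:ℤ) else 0)) • g i
          = v i.castSucc • g i - (if i = j then g i else 0) := by
        intro i
        have h2 : i.castSucc ≠ l := (Fin.castSucc_lt_last i).ne
        by_cases h1 : i = j
        · subst h1; simp [h2, sub_smul, hjc]
        · have : i.castSucc ≠ jc := fun hc => h1 (Fin.castSucc_injective n hc)
          simp [h1, this, h2]
      rw [Finset.sum_congr rfl fun i _ => key i, Finset.sum_sub_distrib, ← hs,
        Finset.sum_ite_eq' Finset.univ j (fun i => g i)]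
      simp [hj]
    · have key : ∀ i : Fin (n + 1),
          (v i - (v i - (if i = jc then 1 else 0) + (if i = l then (1:ℤ) else 0))) ^ 2
          = (if i = jc then 1 else 0) + (if i = l then 1 else 0) := by
        intro i
        by_cases h1 : i = jc <;> by_cases h2 : i = l <;>
          simp_all [(Fin.castSucc_lt_last j).ne']
      rw [Finset.sum_congr rfl fun i _ => key i, Finset.sum_add_distrib]
      simp
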